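/- Every rational subset of ℤ^n (the value set of a finite automaton over ℤ^n) is a semilinear set, i.e., a finite union of sets of the form { s₀ + λ₁s₁ + ⋯ + λ_p s_p : λᵢ ∈ ℕ }. -/

import Mathlib

open scoped BigOperators Pointwise

/-- The linear subset of ℤ^n with constant s₀ and generating vectors s. -/
def linSet {n p : ℕ} (s₀ : Fin n → ℤ) (s : Fin p → Fin n → ℤ) : Set (Fin n → ℤ) :=
  {v | ∃ lam : Fin p → ℕ, v = s₀ + ∑ i, (lam i : ℤ) • s i}

/-- Rational subsets of the additive group ℤ^n: the smallest class of subsets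
containing the finite (here: empty and singleton) sets and closed under union,
(pointwise) addition, and generated submonoid (Kleene star). -/
inductive IsRationalSubset {n : ℕ} : Set (Fin n → ℤ) → Prop
  | empty : IsRationalSubset ∅
  | singleton (v : Fin n → ℤ) : IsRationalSubset {v}
  | union {S T : Set (Fin n → ℤ)} :
      IsRationalSubset S → IsRationalSubset T → IsRationalSubset (S ∪ T)
  | add {S T : Set (Fin n → ℤ)} :
      IsRationalSubset S → IsRationalSubset T → IsRationalSubset (S + T)
  | star {S : Set (Fin n → ℤ)} :
      IsRationalSubset S → IsRationalSubset (AddSubmonoid.closure S : Set (Fin n → ℤ))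

/-- Data describing one linear set. -/
abbrev LinData (n : ℕ) := Σ p : ℕ, (Fin n → ℤ) × (Fin p → Fin n → ℤ)

def LinData.toSet {n : ℕ} (d : LinData n) : Set (Fin n → ℤ) := linSet d.2.1 d.2.2

def listSet {n : ℕ} (L : List (LinData n)) : Set (Fin n → ℤ) :=
  (L.map LinData.toSet).foldr (· ∪ ·) ∅

@[simp] lemma listSet_nil {n : ℕ} : listSet ([] : List (LinData n)) = ∅ := rfl

@[simp] lemma listSet_cons {n : ℕ} (d : LinData n) (L : List (LinData n)) :
    listSet (d :: L) = d.toSet ∪ listSet L := rfl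

lemma listSet_append {n : ℕ} (L₁ L₂ : List (LinData n)) :
    listSet (L₁ ++ L₂) = listSet L₁ ∪ listSet L₂ := by
  induction L₁ with
  | nil => simp
  | cons d L ih => simp [ih, Set.union_assoc]

/-- Semilinear via a list of linear data. -/
def SL {n : ℕ} (S : Set (Fin n → ℤ)) : Prop := ∃ L : List (LinData n), S = listSet L

lemma sum_append_smul {n p q : ℕ} (s : Fin p → Fin n → ℤ) (t : Fin q → Fin n → ℤ)
    (ν : Fin (p + q) → ℕ) :
    ∑ i, (ν i : ℤ) • Fin.append s t i =
      ∑ i, (ν (Fin.castAdd q i) : ℤ) • s i + ∑ i, (ν (Fin.natAdd p i) : ℤ) • t i := by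
  rw [Fin.sum_univ_add]
  simp [Fin.append_left, Fin.append_right]

/-- The combination of two linear data, with sum of the linear sets. -/
def LinData.addData {n : ℕ} (d e : LinData n) : LinData n :=
  ⟨d.1 + e.1, (d.2.1 + e.2.1, Fin.append d.2.2 e.2.2)⟩

lemma linSet_add_linSet {n p q : ℕ} (a b : Fin n → ℤ) (s : Fin p → Fin n → ℤ)
    (t : Fin q → Fin n → ℤ) :
    linSet a s + linSet b t = linSet (a + b) (Fin.append s t) := by
  ext v
  constructor
  · rintro ⟨x, ⟨lam, rfl⟩, y, ⟨mu, rfl⟩, rfl⟩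
    refine ⟨Fin.append lam mu, ?_⟩
    rw [sum_append_smul]
    simp only [Fin.append_left, Fin.append_right]
    abel
  · rintro ⟨ν, rfl⟩
    refine ⟨a + ∑ i, (ν (Fin.castAdd q i) : ℤ) • s i, ⟨_, rfl⟩,
      b + ∑ i, (ν (Fin.natAdd p i) : ℤ) • t i, ⟨_, rfl⟩, ?_⟩
    rw [sum_append_smul]
    abel_nf

lemma toSet_add {n : ℕ} (d e : LinData n) :
    d.toSet + e.toSet = (d.addData e).toSet := by
  cases d; cases e
  exact linSet_add_linSet _ _ _ _

lemma toSet_add_listSet {n : ℕ} (d : LinData n) (L : List (LinData n)) :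
    d.toSet + listSet L = listSet (L.map d.addData) := by
  induction L with
  | nil => simp
  | cons e L ih => simp [Set.add_union, ih, toSet_add]

lemma listSet_add {n : ℕ} (L₁ L₂ : List (LinData n)) :
    listSet L₁ + listSet L₂ = listSet (L₁.flatMap fun d => L₂.map d.addData) := by
  induction L₁ with
  | nil => simp
  | cons d L ih =>
      simp only [listSet_cons, Set.union_add, ih, List.flatMap_cons, listSet_append,
        toSet_add_listSet]

/-- The data for the closure of a linear set: {0} and the starred set. -/
def LinData.zeroData (n : ℕ) : LinData n := ⟨0, (0, Fin.elim0)⟩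

def LinData.starData {n : ℕ} (d : LinData n) : LinData n :=
  ⟨d.1 + 1, (d.2.1, Fin.cons d.2.1 d.2.2)⟩

@[simp] lemma zeroData_toSet {n : ℕ} : (LinData.zeroData n).toSet = {0} := by
  ext v
  simp [LinData.zeroData, LinData.toSet, linSet]

lemma sum_cons_smul {n p : ℕ} (s₀ : Fin n → ℤ) (s : Fin p → Fin n → ℤ)
    (lam : Fin (p + 1) → ℕ) :
    ∑ i, (lam i : ℤ) • Fin.cons s₀ s i =
      (lam 0 : ℤ) • s₀ + ∑ i : Fin p, (lam i.succ : ℤ) • s i := by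
  rw [Fin.sum_univ_succ]
  simp

lemma closure_linSet {n p : ℕ} (s₀ : Fin n → ℤ) (s : Fin p → Fin n → ℤ) :
    (AddSubmonoid.closure (linSet s₀ s) : Set (Fin n → ℤ)) =
      {0} ∪ linSet s₀ (Fin.cons s₀ s) := by
  have hM : ∃ M : AddSubmonoid (Fin n → ℤ),
      (M : Set (Fin n → ℤ)) = {0} ∪ linSet s₀ (Fin.cons s₀ s) := by
    refine ⟨⟨⟨{0} ∪ linSet s₀ (Fin.cons s₀ s), ?_⟩, Or.inl rfl⟩, rfl⟩
    rintro a b (rfl | ⟨mu, rfl⟩)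
    · simp only [zero_add]
      exact fun h => h
    · rintro (rfl | ⟨nu, rfl⟩)
      · simp only [add_zero]
        exact Or.inr ⟨mu, rfl⟩
      · refine Or.inr ⟨Fin.cons (mu 0 + nu 0 + 1) (fun i => mu i.succ + nu i.succ), ?_⟩
        rw [sum_cons_smul, sum_cons_smul, sum_cons_smul]
        simp only [Fin.cons_zero, Fin.cons_succ]
        push_cast
        simp only [add_smul, one_smul, Finset.sum_add_distrib]
        abel
  obtain ⟨M, hMs⟩ := hM
  apply le_antisymm
  · rw [← hMs]
    intro v hv
    refine AddSubmonoid.closure_le.mpr ?_ hv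
    rw [hMs]
    rintro w ⟨lam, rfl⟩
    refine Or.inr ⟨Fin.cons 0 lam, ?_⟩
    rw [sum_cons_smul]
    simp
  · rintro v (rfl | ⟨lam, rfl⟩)
    · exact AddSubmonoid.zero_mem _
    · rw [sum_cons_smul]
      have hs₀ : s₀ ∈ AddSubmonoid.closure (linSet s₀ s) :=
        AddSubmonoid.subset_closure ⟨0, by simp⟩
      have h1 : s₀ + ∑ i : Fin p, (lam i.succ : ℤ) • s i ∈
          AddSubmonoid.closure (linSet s₀ s) :=
        AddSubmonoid.subset_closure ⟨fun i => lam i.succ, rfl⟩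
      have h2 : (lam 0 : ℤ) • s₀ ∈ AddSubmonoid.closure (linSet s₀ s) := by
        rw [natCast_zsmul]
        exact AddSubmonoid.nsmul_mem _ hs₀ _
      have := AddSubmonoid.add_mem _ h2 h1
      convert this using 1
      abel
      exact SetLike.mem_coe

lemma closure_listSet {n : ℕ} (L : List (LinData n)) :
    ∃ L' : List (LinData n),
      (AddSubmonoid.closure (listSet L) : Set (Fin n → ℤ)) = listSet L' := by
  induction L with
  | nil =>
      refine ⟨[LinData.zeroData n], ?_⟩
      simp [AddSubmonoid.closure_empty]
  | cons d L ih =>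
      obtain ⟨L', hL'⟩ := ih
      refine ⟨[LinData.zeroData n, d.starData].flatMap fun e => L'.map e.addData, ?_⟩
      rw [← listSet_add, ← hL']
      have hcl : (AddSubmonoid.closure (d.toSet) : Set (Fin n → ℤ)) =
          listSet [LinData.zeroData n, d.starData] := by
        obtain ⟨p, a, s⟩ := d
        rw [show LinData.toSet ⟨p, (a, s)⟩ = linSet a s from rfl, closure_linSet]
        simp only [listSet_cons, listSet_nil, Set.union_empty, zeroData_toSet]
        rfl
      rw [← hcl, listSet_cons, AddSubmonoid.closure_union]
      ext v
      simp only [SetLike.mem_coe, AddSubmonoid.mem_sup, Set.mem_add]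

lemma listSet_eq_iUnion {n : ℕ} (L : List (LinData n)) :
    listSet L = ⋃ i : Fin L.length, (L.get i).toSet := by
  induction L with
  | nil => simp
  | cons d L ih =>
      rw [listSet_cons, ih]
      ext v
      simp only [Set.mem_union, Set.mem_iUnion]
      constructor
      · rintro (hv | ⟨i, hi⟩)
        · exact ⟨⟨0, Nat.succ_pos _⟩, hv⟩
        · exact ⟨i.succ, hi⟩
      · rintro ⟨i, hi⟩
        refine Fin.cases (fun h => Or.inl h) (fun i h => Or.inr ⟨i, h⟩) i hi

/-- Parikh's theorem for ℤ^n: every rational subset of ℤ^n is semilinear. -/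
theorem rational_subset_is_semilinear {n : ℕ} (S : Set (Fin n → ℤ))
    (hS : IsRationalSubset S) :
    ∃ (j : ℕ) (p : Fin j → ℕ) (s₀ : Fin j → Fin n → ℤ)
      (s : (i : Fin j) → Fin (p i) → Fin n → ℤ),
      S = ⋃ i, linSet (s₀ i) (s i) := by
  have hSL : SL S := by
    induction hS with
    | empty => exact ⟨[], rfl⟩
    | singleton v =>
        refine ⟨[⟨0, (v, Fin.elim0)⟩], ?_⟩
        ext w
        simp [LinData.toSet, linSet]
    | union hS hT ihS ihT =>
        obtain ⟨L₁, rfl⟩ := ihS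
        obtain ⟨L₂, rfl⟩ := ihT
        exact ⟨L₁ ++ L₂, (listSet_append L₁ L₂).symm⟩
    | add hS hT ihS ihT =>
        obtain ⟨L₁, rfl⟩ := ihS
        obtain ⟨L₂, rfl⟩ := ihT
        exact ⟨_, listSet_add L₁ L₂⟩
    | star hS ihS =>
        obtain ⟨L, rfl⟩ := ihS
        exact closure_listSet L
  obtain ⟨L, rfl⟩ := hSL
  exact ⟨L.length, fun i => (L.get i).1, fun i => (L.get i).2.1, fun i => (L.get i).2.2,
    listSet_eq_iUnion L⟩
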